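/- Let Σ=(G,σ) be a balanced connected signed graph whose underlying graph G has diameter d ≥ 4. Then λ_n(D^max(Σ)) ≤ −2d+3 and λ_n(D^min(Σ)) ≤ −2d+3. -/

import Mathlib

/-- The least (real) eigenvalue `λₙ` of a matrix. -/
noncomputable def lambdaMin {V : Type*} [Fintype V] (M : Matrix V V ℝ) : ℝ :=
  sInf {μ : ℝ | ∃ x : V → ℝ, x ≠ 0 ∧ M.mulVec x = μ • x}

/-- The sign of a walk: the product of the signs of its edges. -/
noncomputable def walkSign {V : Type*} {G : SimpleGraph V} (σ : V → V → ℝ)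
    {u v : V} (p : G.Walk u v) : ℝ :=
  (p.darts.map fun d => σ d.toProd.1 d.toProd.2).prod

/-- `σ` is a signature for `G`: symmetric, and `±1` on every edge. -/
def EdgeSigns {V : Type*} (G : SimpleGraph V) (σ : V → V → ℝ) : Prop :=
  (∀ u v, σ u v = σ v u) ∧ ∀ u v, G.Adj u v → σ u v = 1 ∨ σ u v = -1

/-- A signed graph is balanced if every cycle has positive sign. -/
def IsBalanced {V : Type*} (G : SimpleGraph V) (σ : V → V → ℝ) : Prop :=
  ∀ (u : V) (p : G.Walk u u), p.IsCycle → walkSign σ p = 1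

/-- `σ_max(u,v)`: the maximum sign of a shortest `u`–`v` path. -/
noncomputable def sigmaMax {V : Type*} (G : SimpleGraph V) (σ : V → V → ℝ) (u v : V) : ℝ :=
  sSup {s : ℝ | ∃ p : G.Walk u v, p.length = G.dist u v ∧ walkSign σ p = s}

/-- `σ_min(u,v)`: the minimum sign of a shortest `u`–`v` path. -/
noncomputable def sigmaMin {V : Type*} (G : SimpleGraph V) (σ : V → V → ℝ) (u v : V) : ℝ :=
  sInf {s : ℝ | ∃ p : G.Walk u v, p.length = G.dist u v ∧ walkSign σ p = s}

/-- The signed distance matrix `D^max(Σ)`. -/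
noncomputable def Dmax {V : Type*} (G : SimpleGraph V) (σ : V → V → ℝ) : Matrix V V ℝ :=
  fun u v => sigmaMax G σ u v * (G.dist u v : ℝ)

/-- The signed distance matrix `D^min(Σ)`. -/
noncomputable def Dmin {V : Type*} (G : SimpleGraph V) (σ : V → V → ℝ) : Matrix V V ℝ :=
  fun u v => sigmaMin G σ u v * (G.dist u v : ℝ)

/-- `G` has diameter `d`. -/
def HasDiameter {V : Type*} (G : SimpleGraph V) (d : ℕ) : Prop :=
  (∀ u v, G.dist u v ≤ d) ∧ ∃ u v, G.dist u v = d

open SimpleGraph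

section Sign
variable {V : Type*} {G : SimpleGraph V} {σ : V → V → ℝ}

@[simp] lemma walkSign_nil {u : V} : walkSign σ (Walk.nil : G.Walk u u) = 1 := by
  simp [walkSign]

@[simp] lemma walkSign_cons {u v w : V} (h : G.Adj u v) (p : G.Walk v w) :
    walkSign σ (Walk.cons h p) = σ u v * walkSign σ p := by
  simp [walkSign]

@[simp] lemma walkSign_append {u v w : V} (p : G.Walk u v) (q : G.Walk v w) :
    walkSign σ (p.append q) = walkSign σ p * walkSign σ q := by
  simp [walkSign, Walk.darts_append]

lemma walkSign_reverse (hσ : ∀ u v, σ u v = σ v u) {u v : V} (p : G.Walk u v) :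
    walkSign σ p.reverse = walkSign σ p := by
  unfold walkSign
  rw [Walk.darts_reverse, List.map_reverse, List.prod_reverse, List.map_map]
  congr 1
  apply List.map_congr_left
  intro d _
  simp [SimpleGraph.Dart.symm, hσ d.toProd.1 d.toProd.2]

lemma walkSign_pm (hσ : EdgeSigns G σ) {u v : V} (p : G.Walk u v) :
    walkSign σ p = 1 ∨ walkSign σ p = -1 := by
  induction p with
  | nil => left; simp
  | cons h q ih =>
    rcases hσ.2 _ _ h with h1 | h1 <;> rcases ih with h2 | h2 <;>
      simp [h1, h2]

lemma walkSign_sq (hσ : EdgeSigns G σ) {u v : V} (p : G.Walk u v) :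
    walkSign σ p * walkSign σ p = 1 := by
  rcases walkSign_pm hσ p with h | h <;> rw [h] <;> norm_num

lemma path_edge_endpoints {x z : V} (hadj : G.Adj x z) (q : G.Walk z x) (hq : q.IsPath)
    (he : s(x, z) ∈ q.edges) : ∃ (h' : G.Adj z x), q = Walk.cons h' Walk.nil := by
  induction q with
  | nil => simp at he
  | @cons z w x h₂ q₂ ih =>
    rw [Walk.edges_cons, List.mem_cons] at he
    rcases he with he | he
    · rw [Sym2.eq_iff] at he
      rcases he with ⟨hxz, _⟩ | ⟨rfl, _⟩
      · exact absurd hxz hadj.ne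
      · have : q₂ = Walk.nil := (Walk.isPath_iff_eq_nil (p := q₂)).mp hq.of_cons
        subst this
        exact ⟨h₂, rfl⟩
    · have hz : z ∈ q₂.support := q₂.snd_mem_support_of_mem_edges he
      rw [Walk.cons_isPath_iff] at hq
      exact absurd hz hq.2

lemma closed_walk_sign [DecidableEq V] (hσ : EdgeSigns G σ) (hbal : IsBalanced G σ) (u : V)
    (w : G.Walk u u) : walkSign σ w = 1 := by
  suffices H : ∀ N u (w : G.Walk u u), w.length ≤ N → walkSign σ w = 1 from
    H w.length u w le_rfl
  intro N
  induction N with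
  | zero =>
    intro u w hw
    rw [Nat.le_zero] at hw
    cases w with
    | nil => simp
    | cons h p => simp at hw
  | succ N ih =>
    intro u w hw
    cases w with
    | nil => simp
    | @cons _ v _ h p =>
      by_cases hpath : p.IsPath
      · by_cases hcyc : (Walk.cons h p).IsCycle
        · exact hbal u _ hcyc
        · rw [Walk.cons_isCycle_iff] at hcyc
          push_neg at hcyc
          obtain ⟨hadj', rfl⟩ := path_edge_endpoints h p hpath (hcyc hpath)
          rcases hσ.2 u v h with h1 | h1 <;>
            simp [h1, hσ.1 v u]
      · -- p has a repeated vertex x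
        rw [Walk.isPath_def] at hpath
        obtain ⟨x, hdup⟩ := List.exists_duplicate_iff_not_nodup.mpr hpath
        have hcount : 2 ≤ p.support.count x := List.duplicate_iff_two_le_count.mp hdup
        have hx : x ∈ p.support := List.count_pos_iff.mp (by omega)
        have hspec := (p.take_spec hx).symm
        set t := p.takeUntil x hx with ht
        set r := p.dropUntil x hx with hr
        have hcount1 : t.support.count x = 1 := p.count_support_takeUntil_eq_one hx
        have hsupp : p.support = t.support ++ r.support.tail := by
          rw [hspec, Walk.support_append]
        have hxr : x ∈ r.support.tail := by
          rw [hsupp, List.count_append] at hcount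
          exact List.count_pos_iff.mp (by omega)
        have hrnil : ¬ r.Nil := by
          intro hn
          rw [Walk.nil_iff_support_eq] at hn
          rw [hn] at hxr
          simp at hxr
        obtain ⟨y, h₄, r₄, hr₄⟩ := Walk.not_nil_iff.mp hrnil
        have hxr₄ : x ∈ r₄.support := by
          rw [hr₄, Walk.support_cons] at hxr
          simpa using hxr
        have hspec4 := (r₄.take_spec hxr₄).symm
        set t₄ := r₄.takeUntil x hxr₄ with ht₄
        set s := r₄.dropUntil x hxr₄ with hs
        have hlenp : t.length + r.length = p.length := by
          have := congrArg Walk.length hspec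
          rw [Walk.length_append] at this
          omega
        have hlenr : r.length = r₄.length + 1 := by rw [hr₄]; simp
        have hlenr₄ : t₄.length + s.length = r₄.length := by
          have := congrArg Walk.length hspec4
          rw [Walk.length_append] at this
          omega
        have hwlen : p.length + 1 ≤ N + 1 := by simpa using hw
        have hm : walkSign σ (Walk.cons h₄ t₄ : G.Walk x x) = 1 := by
          apply ih
          simp only [Walk.length_cons]
          omega
        have hw2 : walkSign σ (Walk.cons h (t.append s) : G.Walk u u) = 1 := by
          apply ih
          simp only [Walk.length_cons, Walk.length_append]
          omega
        have hws : walkSign σ (Walk.cons h p) =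
            σ u v * (walkSign σ t * (σ x y * (walkSign σ t₄ * walkSign σ s))) := by
          conv_lhs => rw [hspec, hr₄, hspec4]
          simp [mul_assoc]
        rw [walkSign_cons, walkSign_append] at hw2
        rw [walkSign_cons] at hm
        rw [hws]
        linear_combination (σ u v * walkSign σ t * walkSign σ s) * hm + hw2

end Sign

open Matrix in
lemma lambdaMin_le_rayleigh {n : ℕ} (M : Matrix (Fin n) (Fin n) ℝ) (hM : M.IsHermitian)
    (x : Fin n → ℝ) (hx : x ≠ 0) (c : ℝ) (hc : x ⬝ᵥ M.mulVec x ≤ c * (x ⬝ᵥ x)) :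
    lambdaMin M ≤ c := by
  classical
  have hne : Nonempty (Fin n) := by
    rcases Function.ne_iff.mp hx with ⟨i, _⟩
    exact ⟨i⟩
  obtain ⟨i0, -, hmin⟩ := Finset.exists_min_image Finset.univ hM.eigenvalues
    ⟨hne.some, Finset.mem_univ _⟩
  set μ := hM.eigenvalues i0 with hμ
  set b := hM.eigenvectorBasis with hb
  have hinner : ∀ y z : EuclideanSpace ℝ (Fin n),
      inner ℝ y z = (y : Fin n → ℝ) ⬝ᵥ (z : Fin n → ℝ) := by
    intro y z
    rw [PiLp.inner_apply]
    simp [dotProduct, mul_comm]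
  have hsn : ∀ y : Fin n → ℝ, 0 ≤ y ⬝ᵥ y :=
    fun y => Finset.sum_nonneg fun i _ => mul_self_nonneg (y i)
  have key : ∀ y : Fin n → ℝ, μ * (y ⬝ᵥ y) ≤ y ⬝ᵥ M.mulVec y := by
    intro y
    have hsym : Mᵀ = M := hM
    set yE : EuclideanSpace ℝ (Fin n) := WithLp.toLp 2 y
    have hMby : ∀ i, inner ℝ (b i) (WithLp.toLp 2 (M.mulVec y : Fin n → ℝ))
        = hM.eigenvalues i * inner ℝ (b i) yE := by
      intro i
      rw [hinner, hinner, WithLp.ofLp_toLp]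
      have : (b i : Fin n → ℝ) ⬝ᵥ M.mulVec y = (M.mulVec (b i)) ⬝ᵥ y := by
        rw [Matrix.dotProduct_mulVec, ← Matrix.mulVec_transpose, hsym]
      have hmv : M.mulVec (b i : Fin n → ℝ) = hM.eigenvalues i • (b i : Fin n → ℝ) :=
        hM.mulVec_eigenvectorBasis i
      rw [this, hmv, smul_dotProduct]
      rfl
    have expand := OrthonormalBasis.sum_inner_mul_inner b yE
      (WithLp.toLp 2 (M.mulVec y : Fin n → ℝ))
    have expand2 := OrthonormalBasis.sum_inner_mul_inner b yE yE
    rw [hinner] at expand expand2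
    calc μ * (y ⬝ᵥ y) = ∑ i, μ * (inner ℝ yE (b i) * inner ℝ (b i) yE : ℝ) := by
          rw [← Finset.mul_sum, expand2]
      _ ≤ ∑ i, hM.eigenvalues i * (inner ℝ yE (b i) * inner ℝ (b i) yE : ℝ) := by
          apply Finset.sum_le_sum
          intro i _
          have h1 : (inner ℝ yE (b i) * inner ℝ (b i) yE : ℝ) = (inner ℝ (b i) yE : ℝ)^2 := by
            rw [real_inner_comm yE (b i)]; ring
          rw [h1]
          exact mul_le_mul_of_nonneg_right (hmin i (Finset.mem_univ i)) (sq_nonneg _)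
      _ = y ⬝ᵥ M.mulVec y := by
          refine Eq.trans ?_ expand
          apply Finset.sum_congr rfl
          intro i _
          rw [hMby i]
          ring
  have hμmem : μ ∈ {μ : ℝ | ∃ x : Fin n → ℝ, x ≠ 0 ∧ M.mulVec x = μ • x} := by
    refine ⟨b i0, ?_, hM.mulVec_eigenvectorBasis i0⟩
    intro h0
    have := b.orthonormal.1 i0
    rw [show (b i0 : EuclideanSpace ℝ (Fin n)) = 0 from by simpa using h0] at this
    simp at this
  have hbdd : BddBelow {μ : ℝ | ∃ x : Fin n → ℝ, x ≠ 0 ∧ M.mulVec x = μ • x} := by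
    refine ⟨μ, ?_⟩
    rintro μ' ⟨y, hy0, hy⟩
    have hyy : 0 < y ⬝ᵥ y := by
      rcases lt_or_eq_of_le (hsn y) with h | h
      · exact h
      · exact absurd (dotProduct_self_eq_zero.mp h.symm) hy0
    have := key y
    rw [hy, dotProduct_smul] at this
    have := le_of_mul_le_mul_right (by simpa [smul_eq_mul] using this) hyy
    linarith [this]
  have h1 : lambdaMin M ≤ μ := csInf_le hbdd hμmem
  have hxx : 0 < x ⬝ᵥ x := by
    rcases lt_or_eq_of_le (hsn x) with h | h
    · exact h
    · exact absurd (dotProduct_self_eq_zero.mp h.symm) hx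
  have h2 : μ * (x ⬝ᵥ x) ≤ c * (x ⬝ᵥ x) := le_trans (key x) hc
  have h3 : μ ≤ c := le_of_mul_le_mul_right (by linarith) hxx
  linarith

open Matrix in
/-- For a balanced connected signed graph of diameter `d ≥ 4`,
`λₙ(D^max(Σ)) ≤ -2d + 3` and `λₙ(D^min(Σ)) ≤ -2d + 3`. -/
theorem stmt18 (n : ℕ) (G : SimpleGraph (Fin n)) (σ : Fin n → Fin n → ℝ)
    (hG : G.Connected) (hσ : EdgeSigns G σ) (hbal : IsBalanced G σ)
    (d : ℕ) (hd : 4 ≤ d) (hdiam : HasDiameter G d) :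
    lambdaMin (Dmax G σ) ≤ -2 * (d : ℝ) + 3 ∧
    lambdaMin (Dmin G σ) ≤ -2 * (d : ℝ) + 3 := by
  classical
  -- all walks with the same endpoints have the same sign
  have hcongr : ∀ {u v : Fin n} (p q : G.Walk u v), walkSign σ p = walkSign σ q := by
    intro u v p q
    have h1 : walkSign σ (p.append q.reverse) = 1 := closed_walk_sign hσ hbal u _
    rw [walkSign_append, walkSign_reverse hσ.1] at h1
    have h2 := walkSign_sq hσ q
    calc walkSign σ p = walkSign σ p * (walkSign σ q * walkSign σ q) := by rw [h2, mul_one]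
      _ = (walkSign σ p * walkSign σ q) * walkSign σ q := by ring
      _ = walkSign σ q := by rw [h1, one_mul]
  have hsig : ∀ {u v : Fin n} (p : G.Walk u v), p.length = G.dist u v →
      sigmaMax G σ u v = walkSign σ p ∧ sigmaMin G σ u v = walkSign σ p := by
    intro u v p hp
    have hset : {s : ℝ | ∃ q : G.Walk u v, q.length = G.dist u v ∧ walkSign σ q = s}
        = {walkSign σ p} := by
      ext s
      constructor
      · rintro ⟨q, hq, rfl⟩
        exact hcongr q p
      · rintro rfl
        exact ⟨p, hp, rfl⟩
    constructor
    · rw [sigmaMax, hset, csSup_singleton]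
    · rw [sigmaMin, hset, csInf_singleton]
  have hent : ∀ {u v : Fin n} (p : G.Walk u v), p.length = G.dist u v →
      Dmax G σ u v = walkSign σ p * (G.dist u v : ℝ) := by
    intro u v p hp
    show sigmaMax G σ u v * (G.dist u v : ℝ) = _
    rw [(hsig p hp).1]
  have hDD : Dmax G σ = Dmin G σ := by
    funext u v
    obtain ⟨p, hp⟩ := hG.exists_walk_length_eq_dist u v
    show sigmaMax G σ u v * (G.dist u v : ℝ) = sigmaMin G σ u v * (G.dist u v : ℝ)
    rw [(hsig p hp).1, (hsig p hp).2]
  have hsymm : (Dmax G σ).IsHermitian := by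
    refine Matrix.IsHermitian.ext fun u v => ?_
    obtain ⟨p, hp⟩ := hG.exists_walk_length_eq_dist v u
    have hp' : p.reverse.length = G.dist u v := by
      rw [Walk.length_reverse, hp, SimpleGraph.dist_comm]
    rw [hent p hp, hent p.reverse hp', walkSign_reverse hσ.1, SimpleGraph.dist_comm]
    simp [RCLike.star_def]
  have hDsym : ∀ x y : Fin n, Dmax G σ x y = Dmax G σ y x := by
    intro x y
    conv_lhs => rw [← hsymm]
    rfl
  have hdiag : ∀ x : Fin n, Dmax G σ x x = 0 := by
    intro x
    show sigmaMax G σ x x * (G.dist x x : ℝ) = 0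
    rw [SimpleGraph.dist_self]
    simp
  obtain ⟨hle, u, v, huv⟩ := hdiam
  obtain ⟨e, rfl⟩ : ∃ e, d = e + 2 := ⟨d - 2, by omega⟩
  have he : 2 ≤ e := by omega
  obtain ⟨p₀, hp₀⟩ := hG.exists_walk_length_eq_dist u v
  cases p₀ with
  | nil =>
    rw [SimpleGraph.dist_self] at huv
    omega
  | @cons _ a _ h p' =>
    rw [Walk.length_cons, huv] at hp₀
    have hlp' : p'.length = e + 1 := by omega
    have hua : G.dist u a = 1 := SimpleGraph.dist_eq_one_iff_adj.mpr h
    have hav : G.dist a v = e + 1 := by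
      have h1 : G.dist a v ≤ e + 1 := hlp' ▸ SimpleGraph.dist_le p'
      have h2 := hG.dist_triangle (u := u) (v := a) (w := v)
      omega
    have hvna : v ≠ a := by
      intro hh
      subst hh
      rw [SimpleGraph.dist_self] at hav
      omega
    obtain ⟨b, h₂, r, hr⟩ := Walk.exists_eq_cons_of_ne hvna p'.reverse
    have hlr : r.length = e := by
      have := congrArg Walk.length hr
      rw [Walk.length_reverse, hlp', Walk.length_cons] at this
      omega
    have hbv : G.dist b v = 1 := SimpleGraph.dist_eq_one_iff_adj.mpr h₂.symm
    have hab : G.dist a b = e := by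
      have h1 : G.dist a b ≤ e := by
        have := SimpleGraph.dist_le r.reverse
        rwa [Walk.length_reverse, hlr] at this
      have h2 := hG.dist_triangle (u := a) (v := b) (w := v)
      omega
    have hub : G.dist u b = e + 1 := by
      have h1 : G.dist u b ≤ e + 1 := by
        have := SimpleGraph.dist_le (Walk.cons h r.reverse)
        rwa [Walk.length_cons, Walk.length_reverse, hlr] at this
      have h2 := hG.dist_triangle (u := u) (v := b) (w := v)
      omega
    -- distinctness
    have nua : u ≠ a := h.ne
    have nub : u ≠ b := by intro hh; subst hh; rw [SimpleGraph.dist_self] at hub; omega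
    have nuv : u ≠ v := by intro hh; subst hh; rw [SimpleGraph.dist_self] at huv; omega
    have nab : a ≠ b := by intro hh; subst hh; rw [SimpleGraph.dist_self] at hab; omega
    have nav : a ≠ v := fun hh => hvna hh.symm
    have nbv : b ≠ v := by intro hh; subst hh; rw [SimpleGraph.dist_self] at hbv; omega
    -- signs
    set A := σ u a with hA
    set C := σ v b with hC
    set B := walkSign σ r with hB
    have hA2 : A * A = 1 := by rcases hσ.2 u a h with h' | h' <;> rw [hA, h'] <;> norm_num
    have hC2 : C * C = 1 := by rcases hσ.2 v b h₂ with h' | h' <;> rw [hC, h'] <;> norm_num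
    have hB2 : B * B = 1 := walkSign_sq hσ r
    -- entries
    have hEua : Dmax G σ u a = A := by
      rw [hent (Walk.cons h Walk.nil) (by rw [Walk.length_cons, Walk.length_nil, hua]), hua]
      simp [hA]
    have hEab : Dmax G σ a b = B * (e : ℝ) := by
      rw [hent r.reverse (by rw [Walk.length_reverse, hlr, hab]), hab,
        walkSign_reverse hσ.1]
    have hEbv : Dmax G σ b v = C := by
      have hlen : (Walk.cons h₂ Walk.nil : G.Walk v b).reverse.length = G.dist b v := by
        rw [Walk.length_reverse, Walk.length_cons, Walk.length_nil, hbv]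
      rw [hent _ hlen, hbv, walkSign_reverse hσ.1]
      simp [hC]
    have hEub : Dmax G σ u b = A * B * ((e : ℝ) + 1) := by
      have hlen : (Walk.cons h r.reverse).length = G.dist u b := by
        rw [Walk.length_cons, Walk.length_reverse, hlr, hub]
      rw [hent _ hlen, hub, walkSign_cons, walkSign_reverse hσ.1]
      push_cast
      ring
    have hEav : Dmax G σ a v = B * C * ((e : ℝ) + 1) := by
      have hlen : p'.length = G.dist a v := by rw [hlp', hav]
      have hsgn : walkSign σ p' = C * B := by
        rw [← walkSign_reverse hσ.1 p', hr, walkSign_cons]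
      rw [hent p' hlen, hav, hsgn]
      push_cast
      ring
    have hEuv : Dmax G σ u v = A * B * C * ((e : ℝ) + 2) := by
      have hlen : (Walk.cons h p').length = G.dist u v := by
        rw [Walk.length_cons, hlp', huv]
      have hsgn : walkSign σ p' = C * B := by
        rw [← walkSign_reverse hσ.1 p', hr, walkSign_cons]
      rw [hent _ hlen, huv, walkSign_cons, hsgn]
      push_cast
      ring
    -- reversed entries
    have hEau : Dmax G σ a u = A := (hDsym a u).trans hEua
    have hEba : Dmax G σ b a = B * (e : ℝ) := (hDsym b a).trans hEab
    have hEvb : Dmax G σ v b = C := (hDsym v b).trans hEbv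
    have hEbu : Dmax G σ b u = A * B * ((e : ℝ) + 1) := (hDsym b u).trans hEub
    have hEva : Dmax G σ v a = B * C * ((e : ℝ) + 1) := (hDsym v a).trans hEav
    have hEvu : Dmax G σ v u = A * B * C * ((e : ℝ) + 2) := (hDsym v u).trans hEuv
    -- test vector
    set xv : Fin n → ℝ := Pi.single u 1 + Pi.single a A
        + Pi.single b (-(A * B)) + Pi.single v (-(A * B * C)) with hxv
    have hx0 : xv ≠ 0 := by
      intro h0
      have h1 : xv u = 0 := congrFun h0 u
      rw [hxv] at h1
      simp only [Pi.add_apply, Pi.single_eq_same,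
        Pi.single_eq_of_ne nua, Pi.single_eq_of_ne nub,
        Pi.single_eq_of_ne nuv] at h1
      norm_num at h1
    have hmain : lambdaMin (Dmax G σ) ≤ -2 * ((e + 2 : ℕ) : ℝ) + 3 := by
      apply lambdaMin_le_rayleigh _ hsymm xv hx0
      have hexp : xv ⬝ᵥ (Dmax G σ).mulVec xv ≤ (-2 * ((e + 2 : ℕ) : ℝ) + 3) * (xv ⬝ᵥ xv) := by
        rw [hxv]
        simp only [Matrix.mulVec_add, Matrix.mulVec_single, add_dotProduct,
          dotProduct_add, single_dotProduct]
        simp only [hdiag u, hdiag a, hdiag b, hdiag v, hEua, hEab, hEbv, hEub, hEav, hEuv,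
          hEau, hEba, hEvb, hEbu, hEva, hEvu, dotProduct_single,
          single_dotProduct, Pi.add_apply, Pi.single_eq_same,
          Pi.single_eq_of_ne (Ne.symm nua), Pi.single_eq_of_ne (Ne.symm nub),
          Pi.single_eq_of_ne (Ne.symm nuv), Pi.single_eq_of_ne nua,
          Pi.single_eq_of_ne (Ne.symm nab), Pi.single_eq_of_ne (Ne.symm nav),
          Pi.single_eq_of_ne nub, Pi.single_eq_of_ne nab,
          Pi.single_eq_of_ne (Ne.symm nbv), Pi.single_eq_of_ne nuv,
          Pi.single_eq_of_ne nav, Pi.single_eq_of_ne nbv, Pi.smul_apply, op_smul_eq_mul,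
          Matrix.col_apply]
        refine le_of_eq ?_
        push_cast
        linear_combination (-(2 * (e : ℝ) + 1) * (B * B)) * hA2
          + (-(2 * (e : ℝ) + 3) * (A * A) * (C * C) - (2 * (e : ℝ) + 1)) * hB2
          + (-(2 * (e : ℝ) + 3) * (A * A)) * hC2
      exact hexp
    refine ⟨hmain, ?_⟩
    rw [← hDD]
    exact hmain
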